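/- Let a, b be coprime positive integers. For w ∈ S_a with c cycles, the number of rational slope parking functions in Park_{a,b} fixed by the action of w (permuting positions) equals b^{c-1}. -/

import Mathlib

/-- `p` is a rational slope `(a,b)`-parking function: a sequence of positive
integers whose nondecreasing rearrangement `p'` satisfies
`a * (p'_i - 1) ≤ b * (i - 1)` (i.e. `p'_i ≤ (b/a)(i-1) + 1`). -/
def IsRatParking (a b : ℕ) (p : Fin a → ℕ) : Prop :=
  (∀ i, 1 ≤ p i) ∧ ∀ i : Fin a, a * (p (Tuple.sort p i) - 1) ≤ b * (i : ℕ)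

/-- The number of cycles of a permutation, counting fixed points as 1-cycles. -/
noncomputable def cycleCount {n : ℕ} (w : Equiv.Perm (Fin n)) : ℕ :=
  w.cycleType.card + Set.ncard (Function.fixedPoints ⇑w)

open Finset Equiv

def Park0 (a b : ℕ) (f : Fin a → ℕ) : Prop :=
  ∀ v, 1 ≤ v → v < b → a * v < b * (Finset.univ.filter fun i => f i < v).card

lemma card_filter_perm {a : ℕ} (σ : Equiv.Perm (Fin a)) (P : ℕ → Prop) [DecidablePred P]
    (p : Fin a → ℕ) :
    #(Finset.univ.filter fun i => P (p (σ i))) = #(Finset.univ.filter fun i => P (p i)) := by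
  apply Finset.card_bij' (fun i _ => σ i) (fun i _ => σ.symm i)
  · intro i hi; simp_all
  · intro i hi; simp_all
  · intro i hi; simp
  · intro i hi; simp

lemma monotone_le_iff_card {a : ℕ} (q M : Fin a → ℕ) (hq : Monotone q) (hM : Monotone M) :
    (∀ j, q j ≤ M j) ↔
      ∀ v, #(Finset.univ.filter fun j => M j ≤ v) ≤ #(Finset.univ.filter fun j => q j ≤ v) := by
  constructor
  · intro h v
    apply Finset.card_le_card
    intro j hj
    simp only [Finset.mem_filter, Finset.mem_univ, true_and] at *
    exact le_trans (h j) hj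
  · intro h j
    by_contra hc
    push_neg at hc
    have h1 : Finset.Iic j ⊆ Finset.univ.filter fun k => M k ≤ M j := by
      intro k hk
      simp only [Finset.mem_Iic] at hk
      simp only [Finset.mem_filter, Finset.mem_univ, true_and]
      exact hM hk
    have h2 : (Finset.univ.filter fun k => q k ≤ M j) ⊆ Finset.Iio j := by
      intro k hk
      simp only [Finset.mem_filter, Finset.mem_univ, true_and] at hk
      simp only [Finset.mem_Iio]
      by_contra hkj
      push_neg at hkj
      exact absurd (le_trans (hq hkj) hk) (not_le.mpr hc)
    have := (Finset.card_le_card h1).trans ((h (M j)).trans (Finset.card_le_card h2))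
    rw [Fin.card_Iic] at this
    have : (j : ℕ) + 1 ≤ #(Finset.Iio j) := this
    have hio : #(Finset.Iio j) ≤ (j:ℕ) := by
      rw [Fin.card_Iio]  -- hope exists
    omega

lemma card_filter_coe_lt {a k : ℕ} (hk : k ≤ a) :
    (Finset.univ.filter fun j : Fin a => (j : ℕ) < k).card = k := by
  rw [← Finset.card_range k]
  exact Finset.card_bij' (fun j _ => (j : ℕ))
    (fun j hj => (⟨j, lt_of_lt_of_le (Finset.mem_range.mp hj) hk⟩ : Fin a))
    (fun j hj => by simpa using (Finset.mem_filter.mp hj).2)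
    (fun j hj => by simp [Finset.mem_range.mp hj])
    (fun j hj => rfl) (fun j hj => rfl)

lemma staircase_count {a b : ℕ} (ha : 0 < a) (hb : 0 < b) (hab : Nat.Coprime a b)
    {v : ℕ} (hv1 : 1 ≤ v) (hvb : v < b) :
    ∃ k : ℕ, (Finset.univ.filter fun j : Fin a => b * (j:ℕ) < a * v).card = k ∧
      (∀ j : ℕ, j < k ↔ b * j < a * v) ∧ a * v < b * k := by
  have hndvd : ¬ b ∣ a * v := by
    intro hd
    have : b ∣ v := Nat.Coprime.dvd_of_dvd_mul_left hab.symm hd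
    have := Nat.le_of_dvd (by omega) this
    omega
  have hiff : ∀ j : ℕ, j < a * v / b + 1 ↔ b * j < a * v := by
    intro j
    have hcomm : b * j = j * b := Nat.mul_comm b j
    constructor
    · intro hj
      have hj' : j ≤ a * v / b := by omega
      have h2 := (Nat.le_div_iff_mul_le hb).mp hj'
      have hne : j * b ≠ a * v := fun he => hndvd ⟨j, by omega⟩
      omega
    · intro hj
      have : j ≤ a * v / b := (Nat.le_div_iff_mul_le hb).mpr (by omega)
      omega
  have hk : a * v / b + 1 ≤ a := by
    have : a * v / b < a := Nat.div_lt_of_lt_mul (by nlinarith)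
    omega
  refine ⟨a * v / b + 1, ?_, hiff, ?_⟩
  · rw [← card_filter_coe_lt hk]
    congr 1
    ext j
    simp only [Finset.mem_filter, Finset.mem_univ, true_and]
    exact (hiff j).symm
  · have h1 := Nat.div_add_mod (a * v) b
    have h2 : a * v % b < b := Nat.mod_lt _ hb
    have : b * (a * v / b + 1) = b * (a * v / b) + b := by ring
    omega

lemma isRatParking_le {a b : ℕ} (ha : 0 < a) (hb : 0 < b) {p : Fin a → ℕ}
    (hp : IsRatParking a b p) : ∀ i, p i ≤ b := by
  obtain ⟨h1, h2⟩ := hp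
  intro i
  set σ := Tuple.sort p with hσ
  have hpi : p i = p (σ (σ.symm i)) := by rw [Equiv.apply_symm_apply]
  have := h2 (σ.symm i)
  rw [← hpi] at this
  have hj : ((σ.symm i : Fin a) : ℕ) ≤ a - 1 := by
    have := (σ.symm i).2; omega
  have hb1 : b * ((σ.symm i : Fin a) : ℕ) ≤ b * (a-1) := Nat.mul_le_mul_left _ hj
  have hlt : a * (p i - 1) < a * b := by
    calc a * (p i - 1) ≤ b * (a - 1) := le_trans this hb1
    _ < a * b := by
        have h3 : b * (a - 1) + b = b * a := by
          have h4 : a - 1 + 1 = a := by omega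
          calc b * (a-1) + b = b * (a - 1 + 1) := by ring
          _ = b * a := by rw [h4]
        have h5 : b * a = a * b := Nat.mul_comm b a
        omega
  have := Nat.lt_of_mul_lt_mul_left hlt
  omega

lemma isRatParking_iff {a b : ℕ} (ha : 0 < a) (hb : 0 < b) (hab : Nat.Coprime a b)
    (p : Fin a → ℕ) (h1 : ∀ i, 1 ≤ p i) (hle : ∀ i, p i ≤ b) :
    IsRatParking a b p ↔ Park0 a b (fun i => p i - 1) := by
  set σ := Tuple.sort p with hσ
  set q : Fin a → ℕ := p ∘ σ with hq
  have hqmono : Monotone q := Tuple.monotone_sort p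
  set M : Fin a → ℕ := fun j => b * (j : ℕ) / a + 1 with hM
  have hMmono : Monotone M := by
    intro j k hjk
    simp only [hM]
    have : b * (j:ℕ) ≤ b * (k:ℕ) := Nat.mul_le_mul_left _ (by exact_mod_cast hjk)
    have := Nat.div_le_div_right (c := a) this
    omega
  have hq1 : ∀ j, 1 ≤ q j := fun j => h1 _
  -- step 1: parking cond ↔ q ≤ M pointwise
  have step1 : (∀ j : Fin a, a * (q j - 1) ≤ b * (j:ℕ)) ↔ ∀ j, q j ≤ M j := by
    apply forall_congr'
    intro j
    have h1q := hq1 j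
    constructor
    · intro h
      have hcm : (q j - 1) * a = a * (q j - 1) := Nat.mul_comm _ _
      have : q j - 1 ≤ b * (j:ℕ) / a := (Nat.le_div_iff_mul_le ha).mpr (by omega)
      simp only [hM]; omega
    · intro h
      simp only [hM] at h
      have : q j - 1 ≤ b * (j:ℕ) / a := by omega
      have h6 := (Nat.le_div_iff_mul_le ha).mp this
      have hcm : (q j - 1) * a = a * (q j - 1) := Nat.mul_comm _ _
      omega
  -- counts of q and p agree
  have hcount : ∀ v : ℕ, (Finset.univ.filter fun j => q j ≤ v).card
      = (Finset.univ.filter fun i => p i ≤ v).card := by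
    intro v; exact card_filter_perm σ (fun x => x ≤ v) p
  -- counts of (p - 1 < v) and (p ≤ v) agree
  have hcount2 : ∀ v : ℕ, (Finset.univ.filter fun i => p i - 1 < v).card
      = (Finset.univ.filter fun i => p i ≤ v).card := by
    intro v; congr 1; ext i
    simp only [Finset.mem_filter, Finset.mem_univ, true_and]
    have := h1 i; omega
  constructor
  · rintro ⟨-, h2⟩
    intro v hv1 hvb
    obtain ⟨k, hkcard, hkiff, hkgt⟩ := staircase_count ha hb hab hv1 hvb
    have hMv : (Finset.univ.filter fun j : Fin a => M j ≤ v).card = k := by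
      rw [← hkcard]; congr 1; ext j
      simp only [Finset.mem_filter, Finset.mem_univ, true_and, hM]
      have hdiv : b * (j:ℕ) / a < v ↔ b * (j:ℕ) < v * a := Nat.div_lt_iff_lt_mul ha
      have hcm : v * a = a * v := Nat.mul_comm v a
      omega
    have := ((monotone_le_iff_card q M hqmono hMmono).mp (step1.mp h2)) v
    rw [hMv, hcount] at this
    calc a * v < b * k := hkgt
    _ ≤ b * (Finset.univ.filter fun i => p i ≤ v).card := Nat.mul_le_mul_left _ this
    _ = _ := by rw [← hcount2 v]
  · intro hpark
    refine ⟨h1, step1.mpr ((monotone_le_iff_card q M hqmono hMmono).mpr ?_)⟩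
    intro v
    rw [hcount]
    rcases Nat.lt_or_ge v 1 with hv | hv
    · have : v = 0 := by omega
      subst this
      have h0 : (Finset.univ.filter fun j : Fin a => M j ≤ 0).card = 0 := by
        rw [Finset.card_eq_zero, Finset.filter_eq_empty_iff]
        intro j _
        simp only [hM]
        exact fun h => Nat.not_succ_le_zero _ h
      rw [h0]
      exact Nat.zero_le _
    rcases Nat.lt_or_ge v b with hvb | hvb
    · obtain ⟨k, hkcard, hkiff, hkgt⟩ := staircase_count ha hb hab hv hvb
      have hMv : (Finset.univ.filter fun j : Fin a => M j ≤ v).card = k := by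
        rw [← hkcard]; congr 1; ext j
        simp only [Finset.mem_filter, Finset.mem_univ, true_and, hM]
        have hdiv : b * (j:ℕ) / a < v ↔ b * (j:ℕ) < v * a := Nat.div_lt_iff_lt_mul ha
        have hcm : v * a = a * v := Nat.mul_comm v a
        omega
      rw [hMv]
      have hP := hpark v hv hvb
      rw [hcount2 v] at hP
      by_contra hc
      push_neg at hc
      have hcard_lt : (Finset.univ.filter fun i => p i ≤ v).card < k := hc
      have := (hkiff _).mp hcard_lt
      omega
    · have : (Finset.univ.filter fun i => p i ≤ v) = Finset.univ := by
        rw [Finset.filter_eq_self]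
        intro i _
        exact le_trans (hle i) hvb
      rw [this]
      exact Finset.card_le_card (Finset.subset_univ _)

/-- partial sums of the value-histogram of `g`, extended `b`-periodically. -/
def Acum {a : ℕ} (b : ℕ) (g : Fin a → ℕ) (m : ℕ) : ℕ :=
  ∑ u ∈ Finset.range m, (Finset.univ.filter fun i => g i = u % b).card

lemma Acum_b {a b : ℕ} (g : Fin a → ℕ) (hg : ∀ i, g i < b) : Acum b g b = a := by
  unfold Acum
  have h1 : ∀ u ∈ Finset.range b, (Finset.univ.filter fun i => g i = u % b).card
      = (Finset.univ.filter fun i => g i = u).card := by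
    intro u hu
    rw [Nat.mod_eq_of_lt (Finset.mem_range.mp hu)]
  rw [Finset.sum_congr rfl h1]
  have := Finset.card_eq_sum_card_fiberwise (f := g) (s := Finset.univ) (t := Finset.range b)
    (fun i _ => Finset.mem_range.mpr (hg i))
  rw [← this, Finset.card_univ, Fintype.card_fin]

lemma Acum_add_b {a b : ℕ} (g : Fin a → ℕ) (hg : ∀ i, g i < b) (m : ℕ) :
    Acum b g (m + b) = Acum b g m + a := by
  induction m with
  | zero =>
    rw [Nat.zero_add, Acum_b g hg]
    have : Acum b g 0 = 0 := by unfold Acum; simp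
    omega
  | succ n ih =>
    have h1 : n + 1 + b = (n + b) + 1 := by ring
    rw [h1]
    unfold Acum at *
    rw [Finset.sum_range_succ, Finset.sum_range_succ (n := n)]
    rw [ih, Nat.add_mod_right]
    ring

lemma Acum_window {a b : ℕ} (hb : 0 < b) (g : Fin a → ℕ) (hg : ∀ i, g i < b)
    {t t' v : ℕ} (hbt : (t + t') % b = 0) (hv : v ≤ b) :
    Acum b g (t' + v) = Acum b g t' +
      (Finset.univ.filter fun i => (g i + t) % b < v).card := by
  have hbd : b ∣ t + t' := Nat.dvd_of_mod_eq_zero hbt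
  obtain ⟨c, hc⟩ := hbd
  have hsplit : Acum b g t' + ∑ u ∈ Finset.Ico t' (t' + v),
      (Finset.univ.filter fun i => g i = u % b).card = Acum b g (t' + v) := by
    unfold Acum
    rw [Finset.range_eq_Ico, Finset.range_eq_Ico]
    exact Finset.sum_Ico_consecutive _ (Nat.zero_le _) (Nat.le_add_right _ _)
  rw [← hsplit]
  congr 1
  -- fiberwise decomposition of the filter by i ↦ t' + (g i + t) % b
  have hfib := Finset.card_eq_sum_card_fiberwise
    (f := fun i : Fin a => t' + (g i + t) % b)
    (s := Finset.univ.filter fun i => (g i + t) % b < v)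
    (t := Finset.Ico t' (t' + v))
    (by
      intro i hi
      simp only [Finset.coe_filter, Finset.mem_univ, true_and, Set.mem_setOf_eq] at hi
      simp only [Finset.coe_Ico, Set.mem_Ico]
      omega)
  rw [hfib]
  apply Finset.sum_congr rfl
  intro u hu
  simp only [Finset.mem_Ico] at hu
  congr 1
  ext i
  simp only [Finset.mem_filter, Finset.mem_univ, true_and]
  constructor
  · intro hgu
    -- g i = u % b  →  (g i + t) % b = u - t' < v  and  t' + (g i + t) % b = u
    have hd : u = t' + (u - t') := by omega
    have hdlt : u - t' < v := by omega
    have hgt : (g i + t) % b = u - t' := by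
      calc (g i + t) % b = (u % b + t) % b := by rw [hgu]
      _ = (u + t) % b := by rw [Nat.mod_add_mod]
      _ = ((u - t') + (t + t')) % b := by congr 1; omega
      _ = ((u - t') + b * c) % b := by rw [hc]
      _ = (u - t') % b := by rw [Nat.add_mul_mod_self_left]
      _ = u - t' := Nat.mod_eq_of_lt (by omega)
    refine ⟨by omega, ?_⟩
    rw [hgt]; omega
  · rintro ⟨hlt, hequ⟩
    -- (g i + t) % b < v and t' + (g i + t) % b = u  →  g i = u % b
    have : g i = (g i + t + t') % b := by
      calc g i = g i % b := (Nat.mod_eq_of_lt (hg i)).symm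
      _ = (g i + b * c) % b := by rw [Nat.add_mul_mod_self_left]
      _ = (g i + (t + t')) % b := by rw [hc]
      _ = (g i + t + t') % b := by ring_nf
    rw [this]
    calc (g i + t + t') % b = ((g i + t) % b + t') % b := by rw [Nat.mod_add_mod]
    _ = u % b := by rw [Nat.add_comm ((g i + t) % b) t', hequ]

lemma mod_pair {b : ℕ} (hb : 0 < b) {t : ℕ} (ht : t < b) :
    (b - t) % b < b ∧ (t + (b - t) % b) % b = 0 ∧ (b - (b - t) % b) % b = t := by
  rcases Nat.eq_zero_or_pos t with rfl | htpos
  · simp only [Nat.sub_zero, Nat.mod_self]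
    exact ⟨hb, by simp, by simp [Nat.mod_self]⟩
  · have h1 : b - t < b := by omega
    rw [Nat.mod_eq_of_lt h1]
    refine ⟨h1, ?_, ?_⟩
    · have h2 : t + (b - t) = b := by omega
      rw [h2, Nat.mod_self]
    · have h3 : b - (b - t) = t := by omega
      rw [h3, Nat.mod_eq_of_lt ht]

lemma exists_unique_shift {a b : ℕ} (ha : 0 < a) (hb : 0 < b) (hab : Nat.Coprime a b)
    (g : Fin a → ℕ) (hg : ∀ i, g i < b) :
    ∃! t, t < b ∧ Park0 a b (fun i => (g i + t) % b) := by
  classical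
  set A := Acum b g with hA
  set G : ℕ → ℤ := fun m => (b : ℤ) * A m - (a : ℤ) * m with hGdef
  have hGb : ∀ m, G (m + b) = G m := by
    intro m
    simp only [hGdef, hA, Acum_add_b g hg m]
    push_cast
    ring
  have hGmod : ∀ m, G m = G (m % b) := by
    intro m
    conv_lhs => rw [← Nat.div_add_mod m b]
    generalize m / b = k
    induction k with
    | zero => simp
    | succ n ih =>
      have h : b * (n + 1) + m % b = (b * n + m % b) + b := by ring
      rw [h, hGb, ih]
  have key : ∀ t t' v : ℕ, (t + t') % b = 0 → 1 ≤ v → v < b →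
      ((a : ℤ) * v <
          (b : ℤ) * ((Finset.univ.filter fun i => (g i + t) % b < v).card : ℤ)
        ↔ G t' < G (t' + v)) := by
    intro t t' v hbt hv1 hvb
    have hw := Acum_window hb g hg hbt (le_of_lt hvb)
    have hdiff : G (t' + v) - G t'
        = (b : ℤ) * ((Finset.univ.filter fun i => (g i + t) % b < v).card : ℤ)
          - (a : ℤ) * v := by
      simp only [hGdef, hA, hw]
      push_cast
      ring
    constructor
    · intro h; linarith
    · intro h; linarith
  have hinj : ∀ m1 m2, m1 < b → m2 < b → G m1 = G m2 → m1 = m2 := by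
    intro m1 m2 h1 h2 he
    have hcop : IsCoprime (b : ℤ) (a : ℤ) := by
      rw [Int.isCoprime_iff_gcd_eq_one]
      exact_mod_cast hab.symm
    have hdvd : (b : ℤ) ∣ (a : ℤ) * ((m1 : ℤ) - m2) := by
      refine ⟨A m1 - A m2, ?_⟩
      simp only [hGdef] at he
      linarith [he]
    have hdd := hcop.dvd_of_dvd_mul_left hdvd
    have habs : |(m1 : ℤ) - m2| < (b : ℤ) := by
      rw [abs_lt]
      constructor <;> push_cast <;> omega
    have := Int.eq_zero_of_abs_lt_dvd hdd habs
    omega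
  obtain ⟨t0, ht0mem, ht0min⟩ :=
    Finset.exists_min_image (Finset.range b) G ⟨0, Finset.mem_range.mpr hb⟩
  have ht0b : t0 < b := Finset.mem_range.mp ht0mem
  have ht0strict : ∀ m, m < b → m ≠ t0 → G t0 < G m := by
    intro m hm hne
    rcases lt_or_eq_of_le (ht0min m (Finset.mem_range.mpr hm)) with h | h
    · exact h
    · exact absurd (hinj m t0 hm ht0b h.symm) hne
  -- the winning shift
  obtain ⟨hstar_lt, hstar_zero, hstar_inv⟩ := mod_pair hb ht0b
  refine ⟨(b - t0) % b, ⟨hstar_lt, ?_⟩, ?_⟩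
  · -- existence: Park0 for t* = (b - t0) % b
    intro v hv1 hvb
    have hzero : ((b - t0) % b + t0) % b = 0 := by rwa [Nat.add_comm]
    have hGlt : G t0 < G (t0 + v) := by
      rw [hGmod (t0 + v)]
      apply ht0strict
      · exact Nat.mod_lt _ hb
      · intro hcontra
        have h1 : (t0 + v) % b = t0 % b := by rw [hcontra, Nat.mod_eq_of_lt ht0b]
        have h2 : b ∣ (t0 + v) - t0 := (Nat.modEq_iff_dvd' (Nat.le_add_right _ _)).mp h1.symm
        simp only [Nat.add_sub_cancel_left] at h2
        have := Nat.le_of_dvd (by omega) h2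
        omega
    have := (key ((b - t0) % b) t0 v hzero hv1 hvb).mpr hGlt
    exact_mod_cast this
  · -- uniqueness
    rintro t ⟨htb, hpark⟩
    obtain ⟨hlt', hzero', hinv'⟩ := mod_pair hb htb
    set t' := (b - t) % b with ht'
    have hP : ∀ v, 1 ≤ v → v < b → G t' < G (t' + v) := by
      intro v hv1 hvb
      refine (key t t' v ?_ hv1 hvb).mp ?_
      · rwa [ht']
      · exact_mod_cast hpark v hv1 hvb
    have hstrict' : ∀ m, m < b → m ≠ t' → G t' < G m := by
      intro m hm hne
      rcases Nat.lt_or_ge t' m with hcase | hcase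
      · have := hP (m - t') (by omega) (by omega)
        have he : t' + (m - t') = m := by omega
        rwa [he] at this
      · have hmt : m < t' := by omega
        have := hP (b + m - t') (by omega) (by omega)
        have he : t' + (b + m - t') = m + b := by omega
        rw [he, hGb] at this
        exact this
    have ht't0 : t' = t0 := by
      by_contra hne
      have h1 := hstrict' t0 ht0b (fun h => hne h.symm)
      have h2 := ht0min t' (Finset.mem_range.mpr hlt')
      omega
    rw [← hinv', ht't0]

def cycSetoid {a : ℕ} (w : Equiv.Perm (Fin a)) : Setoid (Fin a) :=
  ⟨w.SameCycle, ⟨fun x => Equiv.Perm.SameCycle.refl w x, fun h => h.symm,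
    fun h1 h2 => h1.trans h2⟩⟩

lemma sameCycle_eq_of_fixed {a : ℕ} {w : Equiv.Perm (Fin a)} {x y : Fin a}
    (h : w.SameCycle x y) (hx : w x = x) : y = x := by
  obtain ⟨k, hk⟩ := h
  rw [← hk, Equiv.Perm.zpow_apply_eq_self_of_apply_eq_self hx]

noncomputable def cycEquiv {a : ℕ} (w : Equiv.Perm (Fin a)) :
    Quotient (cycSetoid w) ≃
      (↥(Function.fixedPoints ⇑w) ⊕ {c // c ∈ w.cycleFactorsFinset}) where
  toFun := Quotient.lift
    (fun x => if h : w x = x then Sum.inl ⟨x, h⟩ else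
      Sum.inr ⟨w.cycleOf x,
        Equiv.Perm.cycleOf_mem_cycleFactorsFinset_iff.mpr (Equiv.Perm.mem_support.mpr h)⟩)
    (by
      intro x y hxy
      have hxy' : w.SameCycle x y := hxy
      by_cases hx : w x = x
      · have : y = x := sameCycle_eq_of_fixed hxy' hx
        subst this; rfl
      · have hy : ¬ w y = y := by
          intro hy
          have : x = y := sameCycle_eq_of_fixed hxy'.symm hy
          rw [this] at hx
          exact hx hy
        simp only [dif_neg hx, dif_neg hy]
        exact congrArg Sum.inr (Subtype.ext hxy'.cycleOf_eq))
  invFun := Sum.elim (fun x => Quotient.mk (cycSetoid w) x.1)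
    (fun c => Quotient.mk (cycSetoid w)
      ((Equiv.Perm.mem_cycleFactorsFinset_iff.mp c.2).1.nonempty_support.choose))
  left_inv := by
    apply Quotient.ind
    intro x
    by_cases hx : w x = x
    · simp only [Quotient.lift_mk, dif_pos hx, Sum.elim_inl]
    · simp only [Quotient.lift_mk, dif_neg hx, Sum.elim_inr]
      apply Quotient.sound
      have hmem := (Equiv.Perm.mem_cycleFactorsFinset_iff.mp
        (Equiv.Perm.cycleOf_mem_cycleFactorsFinset_iff.mpr
          (Equiv.Perm.mem_support.mpr hx))).1.nonempty_support.choose_spec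
      have := (Equiv.Perm.mem_support_cycleOf_iff.mp hmem).1
      exact this.symm
  right_inv := by
    rintro (⟨x, hx⟩ | ⟨c, hc⟩)
    · simp only [Sum.elim_inl, Quotient.lift_mk]
      exact dif_pos hx
    · simp only [Sum.elim_inr, Quotient.lift_mk]
      have hmem := (Equiv.Perm.mem_cycleFactorsFinset_iff.mp hc).1.nonempty_support.choose_spec
      set pt := (Equiv.Perm.mem_cycleFactorsFinset_iff.mp hc).1.nonempty_support.choose with hpt
      have hcpt : c pt = w pt := (Equiv.Perm.mem_cycleFactorsFinset_iff.mp hc).2 pt hmem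
      have hne : ¬ w pt = pt := by
        intro h
        exact (Equiv.Perm.mem_support.mp hmem) (by rw [hcpt, h])
      simp only [dif_neg hne]
      exact congrArg Sum.inr (Subtype.ext (Equiv.Perm.cycle_is_cycleOf hmem hc).symm)

lemma card_quot {a : ℕ} (w : Equiv.Perm (Fin a)) :
    Nat.card (Quotient (cycSetoid w)) = cycleCount w := by
  have h1 : Multiset.card w.cycleType = w.cycleFactorsFinset.card := by
    rw [Equiv.Perm.cycleType_def, Multiset.card_map]
    rfl
  rw [Nat.card_congr (cycEquiv w), Nat.card_sum, Nat.card_coe_set_eq,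
    Nat.card_eq_fintype_card, Fintype.card_coe]
  unfold cycleCount
  omega

lemma fix_zpow {a b : ℕ} {w : Equiv.Perm (Fin a)} {f : Fin a → Fin b}
    (hf : f ∘ ⇑w = f) : ∀ (k : ℤ) (x : Fin a), f ((w ^ k) x) = f x := by
  have hn : ∀ (n : ℕ) (x : Fin a), f ((w ^ n) x) = f x := by
    intro n
    induction n with
    | zero => intro x; simp
    | succ m ih =>
      intro x
      have : (w ^ (m + 1)) x = (w ^ m) (w x) := by
        rw [pow_succ]
        rfl
      rw [this, ih (w x)]
      exact congrFun hf x
  intro k x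
  cases k with
  | ofNat n =>
    have : ((Int.ofNat n : ℤ)) = (n : ℤ) := rfl
    rw [this, zpow_natCast]
    exact hn n x
  | negSucc n =>
    have hinv : (w ^ (n + 1 : ℕ)) ((w ^ (Int.negSucc n)) x) = x := by
      rw [← zpow_natCast, ← Equiv.Perm.mul_apply, ← zpow_add]
      have h0 : ((n + 1 : ℕ) : ℤ) + Int.negSucc n = 0 := by
        simp [Int.negSucc_eq]
      rw [h0]
      rfl
    calc f ((w ^ Int.negSucc n) x)
        = f ((w ^ (n + 1 : ℕ)) ((w ^ (Int.negSucc n)) x)) := (hn (n+1) _).symm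
      _ = f x := by rw [hinv]

noncomputable def fixedFunEquiv {a b : ℕ} (w : Equiv.Perm (Fin a)) :
    {f : Fin a → Fin b // f ∘ ⇑w = f} ≃ (Quotient (cycSetoid w) → Fin b) where
  toFun f := Quotient.lift f.1 (by
    intro x y hxy
    obtain ⟨k, hk⟩ := hxy
    rw [← hk]
    exact (fix_zpow f.2 k x).symm)
  invFun g := ⟨fun x => g (Quotient.mk (cycSetoid w) x), by
    funext x
    show g (Quotient.mk (cycSetoid w) (w x)) = g (Quotient.mk (cycSetoid w) x)
    refine congrArg g (Quotient.sound ?_)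
    exact ⟨-1, by simp⟩⟩
  left_inv f := Subtype.ext rfl
  right_inv g := funext (Quotient.ind fun x => rfl)

lemma card_fixed_fun {a b : ℕ} (w : Equiv.Perm (Fin a)) :
    Nat.card {f : Fin a → Fin b // f ∘ ⇑w = f} = b ^ (cycleCount w) := by
  rw [Nat.card_congr (fixedFunEquiv w), Nat.card_fun, Nat.card_eq_fintype_card,
    Fintype.card_fin, card_quot]

/-- For coprime positive `a, b` and `w ∈ S_a` with `c` cycles, the number of
rational slope parking functions in `Park_{a,b}` fixed by `w` (acting by
permuting positions) equals `b^(c-1)`. -/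
theorem card_parking_fixed_by_perm (a b : ℕ) (ha : 0 < a) (hb : 0 < b)
    (hab : Nat.Coprime a b) (w : Equiv.Perm (Fin a)) :
    Set.ncard {p : Fin a → ℕ | IsRatParking a b p ∧ p ∘ ⇑w = p} =
      b ^ (cycleCount w - 1) := by
  classical
  -- shift operation on Fin b valued functions
  set shf : ℕ → (Fin a → Fin b) → (Fin a → Fin b) :=
    fun t f i => ⟨((f i : ℕ) + t) % b, Nat.mod_lt _ hb⟩ with hshf
  have scomp : ∀ s t (f : Fin a → Fin b), shf t (shf s f) = shf ((s + t) % b) f := by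
    intro s t f
    funext i
    apply Fin.ext
    show (((f i : ℕ) + s) % b + t) % b = ((f i : ℕ) + (s + t) % b) % b
    rw [Nat.mod_add_mod, Nat.add_mod_mod, Nat.add_assoc]
  have sfix : ∀ t (f : Fin a → Fin b), f ∘ ⇑w = f → (shf t f) ∘ ⇑w = shf t f := by
    intro t f hf
    funext i
    apply Fin.ext
    show ((f (w i) : ℕ) + t) % b = ((f i : ℕ) + t) % b
    rw [show f (w i) = f i from congrFun hf i]
  have szero : ∀ f : Fin a → Fin b, shf 0 f = f := by
    intro f
    funext i
    apply Fin.ext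
    show ((f i : ℕ) + 0) % b = (f i : ℕ)
    rw [Nat.add_zero, Nat.mod_eq_of_lt (f i).2]
  -- unique shift choice
  have H : ∀ f : Fin a → Fin b,
      ∃! t, t < b ∧ Park0 a b (fun i => ((f i : ℕ) + t) % b) :=
    fun f => exists_unique_shift ha hb hab (fun i => (f i : ℕ)) (fun i => (f i).2)
  have hshcoe : ∀ t (f : Fin a → Fin b),
      (fun i => ((shf t f) i : ℕ)) = fun i => ((f i : ℕ) + t) % b := by
    intro t f; rfl
  set T : (Fin a → Fin b) → ℕ := fun f => (H f).choose with hT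
  have hT1 : ∀ f, T f < b ∧ Park0 a b (fun i => ((f i : ℕ) + T f) % b) :=
    fun f => (H f).choose_spec.1
  have hT2 : ∀ f t, (t < b ∧ Park0 a b (fun i => ((f i : ℕ) + t) % b)) → t = T f :=
    fun f t h => (H f).choose_spec.2 t h
  -- the big equivalence
  have FFEquiv : {f : Fin a → Fin b // f ∘ ⇑w = f} ≃
      ({f : Fin a → Fin b // f ∘ ⇑w = f ∧ Park0 a b (fun i => (f i : ℕ))} × Fin b) :=
    { toFun := fun f =>
        (⟨shf (T f.1) f.1, sfix _ _ f.2, by rw [hshcoe]; exact (hT1 f.1).2⟩,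
          ⟨T f.1, (hT1 f.1).1⟩)
      invFun := fun gt => ⟨shf ((b - (gt.2 : ℕ)) % b) gt.1.1,
        sfix _ _ gt.1.2.1⟩
      left_inv := by
        rintro ⟨f, hf⟩
        apply Subtype.ext
        show shf ((b - T f) % b) (shf (T f) f) = f
        rw [scomp, (mod_pair hb (hT1 f).1).2.1, szero]
      right_inv := by
        rintro ⟨⟨g, hgw, hgp⟩, t⟩
        obtain ⟨hlt, hzero, hinv⟩ := mod_pair hb t.2
        set f := shf ((b - (t : ℕ)) % b) g with hf
        have hsg : shf (t : ℕ) f = g := by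
          rw [hf, scomp, Nat.add_comm, hzero, szero]
        have htT : (t : ℕ) = T f := by
          apply hT2
          refine ⟨t.2, ?_⟩
          rw [← hshcoe, hsg]
          exact hgp
        have h1 : shf (T f) f = g := by rw [← htT, hsg]
        refine Prod.ext ?_ ?_
        · exact Subtype.ext h1
        · exact Fin.ext htT.symm
      }
  -- card equation
  -- parking set equivalence
  have hSlt : ∀ p : Fin a → ℕ, IsRatParking a b p → ∀ i, p i - 1 < b := by
    intro p hp i
    have h1 := hp.1 i
    have h2 := isRatParking_le ha hb hp i
    omega
  have hfixS : ∀ p : ↥{p : Fin a → ℕ | IsRatParking a b p ∧ p ∘ ⇑w = p},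
      (fun i => (⟨p.1 i - 1, hSlt p.1 p.2.1 i⟩ : Fin b)) ∘ ⇑w
        = fun i => (⟨p.1 i - 1, hSlt p.1 p.2.1 i⟩ : Fin b) := by
    intro p
    funext i
    apply Fin.ext
    show p.1 (w i) - 1 = p.1 i - 1
    rw [show p.1 (w i) = p.1 i from congrFun p.2.2 i]
  have hparkS : ∀ p : ↥{p : Fin a → ℕ | IsRatParking a b p ∧ p ∘ ⇑w = p},
      Park0 a b (fun i => ((⟨p.1 i - 1, hSlt p.1 p.2.1 i⟩ : Fin b) : ℕ)) := by
    intro p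
    exact (isRatParking_iff ha hb hab p.1 p.2.1.1
      (isRatParking_le ha hb p.2.1)).mp p.2.1
  have hifix : ∀ f : {f : Fin a → Fin b // f ∘ ⇑w = f ∧ Park0 a b (fun i => (f i : ℕ))},
      (fun i => (f.1 i : ℕ) + 1) ∘ ⇑w = fun i => (f.1 i : ℕ) + 1 := by
    intro f
    funext i
    show (f.1 (w i) : ℕ) + 1 = (f.1 i : ℕ) + 1
    rw [show f.1 (w i) = f.1 i from congrFun f.2.1 i]
  have hipark : ∀ f : {f : Fin a → Fin b // f ∘ ⇑w = f ∧ Park0 a b (fun i => (f i : ℕ))},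
      IsRatParking a b (fun i => (f.1 i : ℕ) + 1) := by
    intro f
    refine (isRatParking_iff ha hb hab _ ?_ ?_).mpr ?_
    · intro i; omega
    · intro i; have := (f.1 i).2; omega
    · have heq : (fun i => (f.1 i : ℕ) + 1 - 1) = fun i => (f.1 i : ℕ) := by
        funext i; omega
      rw [heq]
      exact f.2.2
  have hSE : ↥{p : Fin a → ℕ | IsRatParking a b p ∧ p ∘ ⇑w = p} ≃
      {f : Fin a → Fin b // f ∘ ⇑w = f ∧ Park0 a b (fun i => (f i : ℕ))} := by
    refine ⟨fun p => ⟨fun i => ⟨p.1 i - 1, hSlt p.1 p.2.1 i⟩, hfixS p, hparkS p⟩,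
      fun f => ⟨fun i => (f.1 i : ℕ) + 1, hipark f, hifix f⟩, ?_, ?_⟩
    · intro p
      apply Subtype.ext
      funext i
      show p.1 i - 1 + 1 = p.1 i
      have := p.2.1.1 i
      omega
    · intro f
      apply Subtype.ext
      funext i
      apply Fin.ext
      show (f.1 i : ℕ) + 1 - 1 = (f.1 i : ℕ)
      omega
  have hncard : Set.ncard {p : Fin a → ℕ | IsRatParking a b p ∧ p ∘ ⇑w = p} =
      Nat.card {f : Fin a → Fin b // f ∘ ⇑w = f ∧ Park0 a b (fun i => (f i : ℕ))} := by
    rw [← Nat.card_coe_set_eq, Nat.card_congr hSE]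
  -- cycleCount ≥ 1
  have hn1 : 1 ≤ cycleCount w := by
    rw [← card_quot w]
    have : Nonempty (Quotient (cycSetoid w)) :=
      ⟨Quotient.mk (cycSetoid w) ⟨0, ha⟩⟩
    exact Nat.card_pos
  have hcard1 : (b : ℕ) ^ (cycleCount w) =
      Nat.card {f : Fin a → Fin b // f ∘ ⇑w = f ∧ Park0 a b (fun i => (f i : ℕ))} * b := by
    rw [← card_fixed_fun (b := b) w, Nat.card_congr FFEquiv, Nat.card_prod,
      Nat.card_eq_fintype_card (α := Fin b), Fintype.card_fin]
  -- final arithmetic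
  rw [hncard]
  have hpow : b ^ (cycleCount w) = b ^ (cycleCount w - 1) * b := by
    conv_lhs => rw [show cycleCount w = (cycleCount w - 1) + 1 from (Nat.succ_pred_eq_of_pos hn1).symm]
    rw [pow_succ]
  rw [hpow] at hcard1
  exact Nat.eq_of_mul_eq_mul_right hb hcard1.symm
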